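/- For any assignment of values v_{ij} ∈ {−1,1} to the nine cells of a 3×3 array, defining Rₖ = vₖ₁vₖ₂vₖ₃ and Cₖ = v₁ₖv₂ₖv₃ₖ, one has R₁ + R₂ + R₃ + C₁ + C₂ − C₃ ≤ 4. Consequently, for any probability distribution over such assignments, 𝔼(R₁)+𝔼(R₂)+𝔼(R₃)+𝔼(C₁)+𝔼(C₂)−𝔼(C₃) ≤ 4. -/

import Mathlib

open MeasureTheory

lemma pm_mul {x y : ℝ} (hx : x = 1 ∨ x = -1) (hy : y = 1 ∨ y = -1) :
    x * y = 1 ∨ x * y = -1 := by rcases hx with h|h <;> rcases hy with h'|h' <;> simp [h, h']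

lemma six_bound {a b c d e f : ℝ} (ha : a = 1 ∨ a = -1) (hb : b = 1 ∨ b = -1)
    (hc : c = 1 ∨ c = -1) (hd : d = 1 ∨ d = -1) (he : e = 1 ∨ e = -1)
    (hf : f = 1 ∨ f = -1) (hp : a * b * c * d * e * f = 1) :
    a + b + c + d + e - f ≤ 4 := by
  rcases ha with h|h <;> rcases hb with h'|h' <;> rcases hc with h''|h'' <;>
    rcases hd with h3|h3 <;> rcases he with h4|h4 <;> rcases hf with h5|h5 <;>
    subst h h' h'' h3 h4 h5 <;> revert hp <;> norm_num

lemma cab_pt (v : Fin 3 → Fin 3 → ℝ) (h : ∀ i j, v i j = 1 ∨ v i j = -1) :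
    (v 0 0 * v 0 1 * v 0 2) + (v 1 0 * v 1 1 * v 1 2) + (v 2 0 * v 2 1 * v 2 2)
      + (v 0 0 * v 1 0 * v 2 0) + (v 0 1 * v 1 1 * v 2 1)
      - (v 0 2 * v 1 2 * v 2 2) ≤ 4 := by
  apply six_bound (pm_mul (pm_mul (h 0 0) (h 0 1)) (h 0 2))
    (pm_mul (pm_mul (h 1 0) (h 1 1)) (h 1 2))
    (pm_mul (pm_mul (h 2 0) (h 2 1)) (h 2 2))
    (pm_mul (pm_mul (h 0 0) (h 1 0)) (h 2 0))
    (pm_mul (pm_mul (h 0 1) (h 1 1)) (h 2 1))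
    (pm_mul (pm_mul (h 0 2) (h 1 2)) (h 2 2))
  have hP := pm_mul (pm_mul (pm_mul (pm_mul (pm_mul (pm_mul (pm_mul (pm_mul (h 0 0) (h 0 1)) (h 0 2)) (h 1 0)) (h 1 1)) (h 1 2)) (h 2 0)) (h 2 1)) (h 2 2)
  have key : (v 0 0 * v 0 1 * v 0 2) * (v 1 0 * v 1 1 * v 1 2) * (v 2 0 * v 2 1 * v 2 2)
      * (v 0 0 * v 1 0 * v 2 0) * (v 0 1 * v 1 1 * v 2 1) * (v 0 2 * v 1 2 * v 2 2)
      = (v 0 0 * v 0 1 * v 0 2 * v 1 0 * v 1 1 * v 1 2 * v 2 0 * v 2 1 * v 2 2)^2 := by ring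
  rw [key]
  rcases hP with h'|h' <;> rw [h'] <;> norm_num

theorem cabello_inequality :
    (∀ v : Fin 3 → Fin 3 → ℝ, (∀ i j, v i j = 1 ∨ v i j = -1) →
      (v 0 0 * v 0 1 * v 0 2) + (v 1 0 * v 1 1 * v 1 2) + (v 2 0 * v 2 1 * v 2 2)
        + (v 0 0 * v 1 0 * v 2 0) + (v 0 1 * v 1 1 * v 2 1)
        - (v 0 2 * v 1 2 * v 2 2) ≤ 4) ∧
    (∀ (Ω : Type) (_ : MeasurableSpace Ω) (μ : Measure Ω), IsProbabilityMeasure μ →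
      ∀ V : Ω → Fin 3 → Fin 3 → ℝ,
        (∀ i j, Measurable fun ω => V ω i j) →
        (∀ ω i j, V ω i j = 1 ∨ V ω i j = -1) →
        (∫ ω, V ω 0 0 * V ω 0 1 * V ω 0 2 ∂μ)
          + (∫ ω, V ω 1 0 * V ω 1 1 * V ω 1 2 ∂μ)
          + (∫ ω, V ω 2 0 * V ω 2 1 * V ω 2 2 ∂μ)
          + (∫ ω, V ω 0 0 * V ω 1 0 * V ω 2 0 ∂μ)
          + (∫ ω, V ω 0 1 * V ω 1 1 * V ω 2 1 ∂μ)
          - (∫ ω, V ω 0 2 * V ω 1 2 * V ω 2 2 ∂μ) ≤ 4) := by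
  refine ⟨cab_pt, ?_⟩
  intro Ω m μ hμ V hmeas hpm
  have habs : ∀ ω (i j : Fin 3), |V ω i j| = 1 := by
    intro ω i j; rcases hpm ω i j with h|h <;> simp [h]
  have hint : ∀ i j i' j' i'' j'' : Fin 3,
      Integrable (fun ω => V ω i j * V ω i' j' * V ω i'' j'') μ := by
    intro i j i' j' i'' j''
    apply Integrable.mono' (integrable_const (1:ℝ))
      (((hmeas i j).mul (hmeas i' j')).mul (hmeas i'' j'')).aestronglyMeasurable
    filter_upwards with ω
    rw [Real.norm_eq_abs]; simp only [Pi.mul_apply]; rw [abs_mul, abs_mul, habs, habs, habs]; norm_num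
  have hintf : Integrable (fun ω =>
      (V ω 0 0 * V ω 0 1 * V ω 0 2) + (V ω 1 0 * V ω 1 1 * V ω 1 2)
        + (V ω 2 0 * V ω 2 1 * V ω 2 2) + (V ω 0 0 * V ω 1 0 * V ω 2 0)
        + (V ω 0 1 * V ω 1 1 * V ω 2 1) - (V ω 0 2 * V ω 1 2 * V ω 2 2)) μ := by
    exact (((((hint 0 0 0 1 0 2).add (hint 1 0 1 1 1 2)).add (hint 2 0 2 1 2 2)).add
      (hint 0 0 1 0 2 0)).add (hint 0 1 1 1 2 1)).sub (hint 0 2 1 2 2 2)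
  have hle : ∫ ω, ((V ω 0 0 * V ω 0 1 * V ω 0 2) + (V ω 1 0 * V ω 1 1 * V ω 1 2)
        + (V ω 2 0 * V ω 2 1 * V ω 2 2) + (V ω 0 0 * V ω 1 0 * V ω 2 0)
        + (V ω 0 1 * V ω 1 1 * V ω 2 1) - (V ω 0 2 * V ω 1 2 * V ω 2 2)) ∂μ
      ≤ ∫ _, (4:ℝ) ∂μ := by
    apply integral_mono hintf (integrable_const 4)
    intro ω
    exact cab_pt (V ω) (fun i j => hpm ω i j)
  rw [integral_const, probReal_univ] at hle
  simp only [ENNReal.toReal_one, smul_eq_mul, one_mul] at hle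
  calc _ = ∫ ω, ((V ω 0 0 * V ω 0 1 * V ω 0 2) + (V ω 1 0 * V ω 1 1 * V ω 1 2)
        + (V ω 2 0 * V ω 2 1 * V ω 2 2) + (V ω 0 0 * V ω 1 0 * V ω 2 0)
        + (V ω 0 1 * V ω 1 1 * V ω 2 1) - (V ω 0 2 * V ω 1 2 * V ω 2 2)) ∂μ := by
        rw [integral_sub (by exact ((((hint 0 0 0 1 0 2).add (hint 1 0 1 1 1 2)).add (hint 2 0 2 1 2 2)).add (hint 0 0 1 0 2 0)).add (hint 0 1 1 1 2 1)) (hint 0 2 1 2 2 2),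
          integral_add (by exact (((hint 0 0 0 1 0 2).add (hint 1 0 1 1 1 2)).add (hint 2 0 2 1 2 2)).add (hint 0 0 1 0 2 0)) (hint 0 1 1 1 2 1),
          integral_add (by exact ((hint 0 0 0 1 0 2).add (hint 1 0 1 1 1 2)).add (hint 2 0 2 1 2 2)) (hint 0 0 1 0 2 0),
          integral_add (by exact (hint 0 0 0 1 0 2).add (hint 1 0 1 1 1 2)) (hint 2 0 2 1 2 2),
          integral_add (hint 0 0 0 1 0 2) (hint 1 0 1 1 1 2)]
    _ ≤ 4 := hle
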